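/- Consider the capacitated graph obtained from the complete graph K₄ on vertices {u, v, w, t} by deleting the edge uv, assigning capacity (1,2) ∪ (3,4) ⊆ ℝ/5ℤ to the edges uw and vw, and capacity (1,4) to the edges ut, vt, and wt. The open 5-capacity of the resulting capacitated g-edge with terminals u and v equals (4,1) ∪ (2,3). -/

import Mathlib

open Finset


open Finset

/-- A finite multigraph given with a reference orientation: each edge `e` goes
from `src e` to `tgt e`.  An orientation of the graph is a sign function
`σ : E → ℤˣ` telling, for each edge, whether it keeps (`1`) or reverses (`-1`)
its reference direction. -/
structure Multigraph where
  V : Type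
  E : Type
  [fintV : Fintype V]
  [fintE : Fintype E]
  [decV : DecidableEq V]
  [decE : DecidableEq E]
  src : E → V
  tgt : E → V

attribute [instance] Multigraph.fintV Multigraph.fintE Multigraph.decV Multigraph.decE

/-- `f` is a flow with respect to the reference orientation: at every vertex the
sum over outgoing edges equals the sum over incoming edges. -/
def Multigraph.IsFlow (G : Multigraph) {M : Type*} [AddCommMonoid M] (f : G.E → M) : Prop :=
  ∀ v : G.V,
    ∑ e ∈ Finset.univ.filter (fun e => G.src e = v), f e =
    ∑ e ∈ Finset.univ.filter (fun e => G.tgt e = v), f e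

/-- `f` is a flow on the orientation `σ` of `G` (values of `f` are read in the
direction given by `σ`). -/
def Multigraph.IsFlowOn (G : Multigraph) {M : Type*} [AddCommGroup M]
    (σ : G.E → ℤˣ) (f : G.E → M) : Prop :=
  G.IsFlow (fun e => ((σ e : ℤ) • f e))

/-- The open interval `(a,b)` of `ℝ/rℤ`: the points traversed strictly clockwise
from `a` to `b`, with the convention `(a,a) = ℝ/rℤ \ {a}`. -/
noncomputable def openArc (r a b : ℝ) : Set (AddCircle r) :=
  (fun t : ℝ => (t : AddCircle r)) '' Set.Ioo a (a + (r - Int.fract ((a - b) / r) * r))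

/-- The closed interval `[a,b]` of `ℝ/rℤ`: the points traversed clockwise from
`a` to `b`, endpoints included, with the convention `[a,a] = {a}`. -/
noncomputable def closedArc (r a b : ℝ) : Set (AddCircle r) :=
  (fun t : ℝ => (t : AddCircle r)) '' Set.Icc a (a + Int.fract ((b - a) / r) * r)

/-- `G` has a circular nowhere-zero `r`-flow: an orientation together with a
real-valued flow all of whose values lie in `[1, r-1]`. -/
def Multigraph.HasCNZF (G : Multigraph) (r : ℝ) : Prop :=
  ∃ (σ : G.E → ℤˣ) (f : G.E → ℝ), G.IsFlowOn σ f ∧ ∀ e, f e ∈ Set.Icc (1:ℝ) (r - 1)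

/-- The circular flow number of `G`, as an extended real (`⊤` if `G` admits no
circular nowhere-zero `r`-flow for any `r`, e.g. if `G` has a bridge). -/
noncomputable def circFlowNumber (G : Multigraph) : EReal :=
  sInf {x : EReal | ∃ r : ℝ, x = (r : EReal) ∧ G.HasCNZF r}

/-- The graph `G ∪ e₀` obtained from `G` by adding one extra edge `e₀ = none`
joining `u` to `v`. -/
def Multigraph.addEdge (G : Multigraph) (u v : G.V) : Multigraph where
  V := G.V
  E := Option G.E
  src := fun e => e.elim u G.src
  tgt := fun e => e.elim v G.tgt

/-- The capacity of the capacitated g-edge `(G, cap)` with terminals `u,v`: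
all values `f e₀` of modular flows `f` on `G ∪ e₀` (over all orientations) whose
value on each edge `e` of `G` lies in the prescribed set `cap e`. -/
def CPcap (r : ℝ) (G : Multigraph) (cap : G.E → Set (AddCircle r)) (u v : G.V) :
    Set (AddCircle r) :=
  {t | ∃ (σ : Option G.E → ℤˣ) (f : Option G.E → AddCircle r),
        (G.addEdge u v).IsFlowOn σ f ∧ (∀ e : G.E, f (some e) ∈ cap e) ∧ f none = t}

/-- The open `r`-capacity `CP_r(G_{u,v})` of the g-edge `G_{u,v}`. -/
noncomputable def CP (r : ℝ) (G : Multigraph) (u v : G.V) : Set (AddCircle r) :=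
  CPcap r G (fun _ => openArc r 1 (r - 1)) u v

/-- A capacitated graph `(G, cap)` admits a flow respecting all capacities
(for `cap e = (1,4) ⊆ ℝ/5ℤ` everywhere this is a sub-5-MCNZF). -/
def HasCapFlow (r : ℝ) (G : Multigraph) (cap : G.E → Set (AddCircle r)) : Prop :=
  ∃ (σ : G.E → ℤˣ) (f : G.E → AddCircle r), G.IsFlowOn σ f ∧ ∀ e, f e ∈ cap e

/-- Deletion of the edge `e₀`. -/
def Multigraph.deleteEdge (G : Multigraph) (e₀ : G.E) : Multigraph where
  V := G.V
  E := {e : G.E // e ≠ e₀}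
  src := fun e => G.src e.1
  tgt := fun e => G.tgt e.1

/-- Degree of a vertex (loops count twice). -/
def Multigraph.degree (G : Multigraph) (v : G.V) : ℕ :=
  (Finset.univ.filter (fun e => G.src e = v)).card +
  (Finset.univ.filter (fun e => G.tgt e = v)).card

/-- The tail of edge `e` in the orientation `σ`. -/
def Multigraph.osrc (G : Multigraph) (σ : G.E → ℤˣ) (e : G.E) : G.V :=
  if σ e = 1 then G.src e else G.tgt e

/-- The head of edge `e` in the orientation `σ`. -/
def Multigraph.otgt (G : Multigraph) (σ : G.E → ℤˣ) (e : G.E) : G.V :=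
  if σ e = 1 then G.tgt e else G.src e

/-- `K₄` on the vertices `u = 0`, `v = 1`, `w = 2`, `t = 3`, with the edge `uv`
deleted.  The five remaining edges, in order, are `uw, vw, ut, vt, wt`. -/
def K4minus : Multigraph where
  V := Fin 4
  E := Fin 5
  src := ![0, 1, 0, 1, 2]
  tgt := ![2, 2, 3, 3, 3]

/-- Capacities: `(1,2) ∪ (3,4)` on `uw` and `vw`, `(1,4)` on `ut`, `vt` and
`wt`. -/
noncomputable def K4minusCap9 : K4minus.E → Set (AddCircle (5 : ℝ)) :=
  ![openArc 5 1 2 ∪ openArc 5 3 4, openArc 5 1 2 ∪ openArc 5 3 4,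
    openArc 5 1 4, openArc 5 1 4, openArc 5 1 4]

namespace K4cap9aux
open Set

noncomputable def emb : ℝ → AddCircle (5:ℝ) := fun t => (t : AddCircle (5:ℝ))

lemma emb_add (x y : ℝ) : emb (x + y) = emb x + emb y := rfl
lemma emb_neg (x : ℝ) : emb (-x) = - emb x := rfl
lemma emb_sub (x y : ℝ) : emb (x - y) = emb x - emb y := rfl

lemma emb_zero_iff (x : ℝ) : emb x = 0 ↔ ∃ n : ℤ, x = 5 * n := by
  rw [emb, AddCircle.coe_eq_zero_iff]
  constructor
  · rintro ⟨n, hn⟩; exact ⟨n, by rw [← hn, zsmul_eq_mul]; ring⟩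
  · rintro ⟨n, hn⟩; exact ⟨n, by rw [hn, zsmul_eq_mul]; ring⟩

lemma emb_eq_iff (x y : ℝ) : emb x = emb y ↔ ∃ n : ℤ, x = y + 5 * n := by
  rw [← sub_eq_zero, ← emb_sub, emb_zero_iff]
  constructor
  · rintro ⟨n, h⟩; exact ⟨n, by linarith⟩
  · rintro ⟨n, h⟩; exact ⟨n, by linarith⟩

lemma arc12 : openArc 5 1 2 = emb '' Ioo 1 2 := by unfold openArc; norm_num [Int.fract]; rfl
lemma arc34 : openArc 5 3 4 = emb '' Ioo 3 4 := by unfold openArc; norm_num [Int.fract]; rfl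
lemma arc14 : openArc 5 1 4 = emb '' Ioo 1 4 := by unfold openArc; norm_num [Int.fract]; rfl
lemma arc41 : openArc 5 4 1 = emb '' Ioo 4 6 := by unfold openArc; norm_num [Int.fract]; rfl
lemma arc23 : openArc 5 2 3 = emb '' Ioo 2 3 := by unfold openArc; norm_num [Int.fract]; rfl

lemma negA {x : AddCircle (5:ℝ)} (h : x ∈ emb '' Ioo 1 2 ∪ emb '' Ioo 3 4) :
    -x ∈ emb '' Ioo 1 2 ∪ emb '' Ioo 3 4 := by
  rcases h with ⟨τ, hτ, rfl⟩ | ⟨τ, hτ, rfl⟩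
  · right
    refine ⟨5 - τ, ⟨by linarith [hτ.1, hτ.2], by linarith [hτ.1, hτ.2]⟩, ?_⟩
    rw [← emb_neg, emb_eq_iff]; exact ⟨1, by ring⟩
  · left
    refine ⟨5 - τ, ⟨by linarith [hτ.1, hτ.2], by linarith [hτ.1, hτ.2]⟩, ?_⟩
    rw [← emb_neg, emb_eq_iff]; exact ⟨1, by ring⟩

lemma negB {x : AddCircle (5:ℝ)} (h : x ∈ emb '' Ioo 1 4) : -x ∈ emb '' Ioo 1 4 := by
  rcases h with ⟨τ, hτ, rfl⟩
  refine ⟨5 - τ, ⟨by linarith [hτ.1, hτ.2], by linarith [hτ.1, hτ.2]⟩, ?_⟩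
  rw [← emb_neg, emb_eq_iff]; exact ⟨1, by ring⟩

lemma negT {x : AddCircle (5:ℝ)} (h : x ∈ emb '' Ioo 4 6 ∪ emb '' Ioo 2 3) :
    -x ∈ emb '' Ioo 4 6 ∪ emb '' Ioo 2 3 := by
  rcases h with ⟨τ, hτ, rfl⟩ | ⟨τ, hτ, rfl⟩
  · left
    refine ⟨10 - τ, ⟨by linarith [hτ.1, hτ.2], by linarith [hτ.1, hτ.2]⟩, ?_⟩
    rw [← emb_neg, emb_eq_iff]; exact ⟨2, by ring⟩
  · right
    refine ⟨5 - τ, ⟨by linarith [hτ.1, hτ.2], by linarith [hτ.1, hτ.2]⟩, ?_⟩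
    rw [← emb_neg, emb_eq_iff]; exact ⟨1, by ring⟩

lemma core (α β γ δ ε : ℝ) (k m : ℤ)
    (hα : α ∈ Ioo (1:ℝ) 2 ∪ Ioo 3 4) (hβ : β ∈ Ioo (1:ℝ) 2 ∪ Ioo 3 4)
    (hγ : γ ∈ Ioo (1:ℝ) 4) (hδ : δ ∈ Ioo (1:ℝ) 4) (hε : ε ∈ Ioo (1:ℝ) 4)
    (hk : α + β - ε = 5 * k) (hm : -(α + γ) - β - δ = 5 * m) :
    ∃ τ, (τ ∈ Ioo (4:ℝ) 6 ∪ Ioo 2 3) ∧ ∃ j : ℤ, -(α + γ) = τ + 5 * j := by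
  obtain ⟨hγ1, hγ2⟩ := hγ; obtain ⟨hδ1, hδ2⟩ := hδ; obtain ⟨hε1, hε2⟩ := hε
  rcases hα with ⟨hα1, hα2⟩ | ⟨hα1, hα2⟩ <;> rcases hβ with ⟨hβ1, hβ2⟩ | ⟨hβ1, hβ2⟩
  · -- α,β ∈ (1,2)
    by_cases h6 : 10 - α - γ < 6
    · exact ⟨10 - α - γ, Or.inl ⟨by linarith, h6⟩, -2, by push_cast; ring⟩
    · by_cases h7 : 7 < 10 - α - γ
      · exact ⟨5 - α - γ, Or.inr ⟨by linarith, by linarith⟩, -1, by push_cast; ring⟩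
      · exfalso
        have hlo : (-10:ℝ) < 5 * m := by linarith
        have hhi : (5:ℝ) * m < -5 := by linarith
        have hlo' : (-10:ℤ) < 5 * m := by exact_mod_cast hlo
        have hhi' : (5:ℤ) * m < -5 := by exact_mod_cast hhi
        omega
  · -- α ∈ (1,2), β ∈ (3,4): contradiction via k
    exfalso
    have hlo : (0:ℝ) < 5 * k := by linarith
    have hhi : (5:ℝ) * k < 5 := by linarith
    have hlo' : (0:ℤ) < 5 * k := by exact_mod_cast hlo
    have hhi' : (5:ℤ) * k < 5 := by exact_mod_cast hhi
    omega
  · -- α ∈ (3,4), β ∈ (1,2)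
    exfalso
    have hlo : (0:ℝ) < 5 * k := by linarith
    have hhi : (5:ℝ) * k < 5 := by linarith
    have hlo' : (0:ℤ) < 5 * k := by exact_mod_cast hlo
    have hhi' : (5:ℤ) * k < 5 := by exact_mod_cast hhi
    omega
  · -- α,β ∈ (3,4)
    by_cases h3 : 10 - α - γ < 3
    · exact ⟨10 - α - γ, Or.inr ⟨by linarith, h3⟩, -2, by push_cast; ring⟩
    · by_cases h4 : 4 < 10 - α - γ
      · exact ⟨10 - α - γ, Or.inl ⟨h4, by linarith⟩, -2, by push_cast; ring⟩
      · exfalso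
        have hlo : (-15:ℝ) < 5 * m := by linarith
        have hhi : (5:ℝ) * m < -10 := by linarith
        have hlo' : (-15:ℤ) < 5 * m := by exact_mod_cast hlo
        have hhi' : (5:ℤ) * m < -10 := by exact_mod_cast hhi
        omega


lemma isflow_iff (g : Option (Fin 5) → AddCircle (5:ℝ)) :
    (K4minus.addEdge ((0 : Fin 4) : K4minus.V) ((1 : Fin 4) : K4minus.V)).IsFlow g ↔
      (g none + (g (some 0) + g (some 2)) = 0 ∧
       g (some 1) + g (some 3) = g none ∧
       g (some 4) = g (some 0) + g (some 1) ∧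
       0 = g (some 2) + g (some 3) + g (some 4)) := by
  constructor
  · intro h
    have h0 := h ((0:Fin 4) : K4minus.V)
    have h1 := h ((1:Fin 4) : K4minus.V)
    have h2 := h ((2:Fin 4) : K4minus.V)
    have h3 := h ((3:Fin 4) : K4minus.V)
    unfold Multigraph.addEdge K4minus at h0 h1 h2 h3
    simp [Multigraph.addEdge, K4minus, Finset.sum_filter,
      Fintype.sum_option, Fin.sum_univ_five] at h0 h1 h2 h3
    exact ⟨h0, h1, h2, h3⟩
  · rintro ⟨h0, h1, h2, h3⟩ v
    fin_cases v <;>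
      unfold Multigraph.addEdge K4minus <;>
      simp [Multigraph.addEdge, K4minus, Finset.sum_filter,
        Fintype.sum_option, Fin.sum_univ_five] <;>
      first
        | exact h0
        | exact h1
        | exact h2
        | exact h3

lemma backward (g : Option (Fin 5) → AddCircle (5:ℝ))
    (h0 : g none + (g (some 0) + g (some 2)) = 0)
    (h1 : g (some 1) + g (some 3) = g none)
    (h2 : g (some 4) = g (some 0) + g (some 1))
    (ha : g (some 0) ∈ emb '' Ioo 1 2 ∪ emb '' Ioo 3 4)
    (hb : g (some 1) ∈ emb '' Ioo 1 2 ∪ emb '' Ioo 3 4)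
    (hc : g (some 2) ∈ emb '' Ioo 1 4)
    (hd : g (some 3) ∈ emb '' Ioo 1 4)
    (he : g (some 4) ∈ emb '' Ioo 1 4) :
    g none ∈ emb '' Ioo 4 6 ∪ emb '' Ioo 2 3 := by
  obtain ⟨α, hα, hA⟩ : ∃ α, α ∈ Ioo (1:ℝ) 2 ∪ Ioo 3 4 ∧ g (some 0) = emb α := by
    rcases ha with ⟨τ, hτ, h⟩ | ⟨τ, hτ, h⟩
    exacts [⟨τ, Or.inl hτ, h.symm⟩, ⟨τ, Or.inr hτ, h.symm⟩]
  obtain ⟨β, hβ, hB⟩ : ∃ β, β ∈ Ioo (1:ℝ) 2 ∪ Ioo 3 4 ∧ g (some 1) = emb β := by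
    rcases hb with ⟨τ, hτ, h⟩ | ⟨τ, hτ, h⟩
    exacts [⟨τ, Or.inl hτ, h.symm⟩, ⟨τ, Or.inr hτ, h.symm⟩]
  obtain ⟨γ, hγ, hC⟩ : ∃ γ, γ ∈ Ioo (1:ℝ) 4 ∧ g (some 2) = emb γ := by
    rcases hc with ⟨τ, hτ, h⟩; exact ⟨τ, hτ, h.symm⟩
  obtain ⟨δ, hδ, hD⟩ : ∃ δ, δ ∈ Ioo (1:ℝ) 4 ∧ g (some 3) = emb δ := by
    rcases hd with ⟨τ, hτ, h⟩; exact ⟨τ, hτ, h.symm⟩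
  obtain ⟨ε, hε, hE⟩ : ∃ ε, ε ∈ Ioo (1:ℝ) 4 ∧ g (some 4) = emb ε := by
    rcases he with ⟨τ, hτ, h⟩; exact ⟨τ, hτ, h.symm⟩
  -- g none = emb (-(α+γ))
  have hn : g none = emb (-(α + γ)) := by
    rw [hA, hC] at h0
    rw [emb_neg, emb_add]
    exact eq_neg_of_add_eq_zero_left h0
  -- ε relation
  have hk : ∃ k : ℤ, α + β - ε = 5 * k := by
    have : emb (α + β - ε) = 0 := by
      rw [emb_sub, emb_add, ← hA, ← hB, ← hE, ← h2]; abel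
    exact (emb_zero_iff _).mp this
  have hm : ∃ m : ℤ, -(α + γ) - β - δ = 5 * m := by
    have : emb (-(α + γ) - β - δ) = 0 := by
      rw [emb_sub, emb_sub, ← hn, ← hB, ← hD, ← h1]; abel
    exact (emb_zero_iff _).mp this
  obtain ⟨k, hk⟩ := hk
  obtain ⟨m, hm⟩ := hm
  obtain ⟨τ, hτ, j, hj⟩ := core α β γ δ ε k m hα hβ hγ hδ hε hk hm
  rw [hn, show emb (-(α+γ)) = emb τ from (emb_eq_iff _ _).mpr ⟨j, hj⟩]
  rcases hτ with h | h
  exacts [Or.inl ⟨τ, h, rfl⟩, Or.inr ⟨τ, h, rfl⟩]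

end K4cap9aux


open K4cap9aux Set in
/-- The open 5-capacity of the capacitated g-edge obtained
from `K₄` by deleting the edge `uv` of a triangle `uvw` and giving capacity
`(1,2) ∪ (3,4)` to the other two edges `uw, vw` of that triangle, and `(1,4)`
to the remaining edges — with terminals `u` and `v` — equals `(4,1) ∪ (2,3)`. -/
theorem K4minus_capacity9 :
    CPcap 5 K4minus K4minusCap9 ((0 : Fin 4) : K4minus.V) ((1 : Fin 4) : K4minus.V)
      = openArc 5 4 1 ∪ openArc 5 2 3 := by
  rw [arc41, arc23]
  ext t
  constructor
  · rintro ⟨σ, f, hflow, hcap, rfl⟩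
    have hcap' : ∀ e : Fin 5, f (some e) ∈ K4minusCap9 e := hcap
    have hsgn : ∀ (x : AddCircle (5:ℝ)) (u : ℤˣ), (u:ℤ) • x = x ∨ (u:ℤ) • x = -x := by
      intro x u; rcases Int.units_eq_one_or u with h | h <;> simp [h]
    have hg := (isflow_iff (fun e : Option (Fin 5) => ((σ e : ℤ) • f e))).mp hflow
    obtain ⟨h0, h1, h2, h3⟩ := hg
    have hc0 : f (some (0 : Fin 5)) ∈ emb '' Ioo 1 2 ∪ emb '' Ioo 3 4 := by
      have h := hcap' (0 : Fin 5); rwa [show K4minusCap9 (0 : Fin 5) = openArc 5 1 2 ∪ openArc 5 3 4 from rfl,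
        arc12, arc34] at h
    have hc1 : f (some (1 : Fin 5)) ∈ emb '' Ioo 1 2 ∪ emb '' Ioo 3 4 := by
      have h := hcap' (1 : Fin 5); rwa [show K4minusCap9 (1 : Fin 5) = openArc 5 1 2 ∪ openArc 5 3 4 from rfl,
        arc12, arc34] at h
    have hc2 : f (some (2 : Fin 5)) ∈ emb '' Ioo 1 4 := by
      have h := hcap' (2 : Fin 5); rwa [show K4minusCap9 (2 : Fin 5) = openArc 5 1 4 from rfl, arc14] at h
    have hc3 : f (some (3 : Fin 5)) ∈ emb '' Ioo 1 4 := by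
      have h := hcap' (3 : Fin 5); rwa [show K4minusCap9 (3 : Fin 5) = openArc 5 1 4 from rfl, arc14] at h
    have hc4 : f (some (4 : Fin 5)) ∈ emb '' Ioo 1 4 := by
      have h := hcap' (4 : Fin 5); rwa [show K4minusCap9 (4 : Fin 5) = openArc 5 1 4 from rfl, arc14] at h
    have ha : (fun e : Option (Fin 5) => ((σ e : ℤ) • f e)) (some (0 : Fin 5)) ∈ emb '' Ioo 1 2 ∪ emb '' Ioo 3 4 := by
      rcases hsgn (f (some (0 : Fin 5))) (σ (some (0 : Fin 5))) with h | h
      exacts [by rwa [← h] at hc0, by have := negA hc0; rwa [← h] at this]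
    have hb : (fun e : Option (Fin 5) => ((σ e : ℤ) • f e)) (some (1 : Fin 5)) ∈ emb '' Ioo 1 2 ∪ emb '' Ioo 3 4 := by
      rcases hsgn (f (some (1 : Fin 5))) (σ (some (1 : Fin 5))) with h | h
      exacts [by rwa [← h] at hc1, by have := negA hc1; rwa [← h] at this]
    have hcc : (fun e : Option (Fin 5) => ((σ e : ℤ) • f e)) (some (2 : Fin 5)) ∈ emb '' Ioo 1 4 := by
      rcases hsgn (f (some (2 : Fin 5))) (σ (some (2 : Fin 5))) with h | h
      exacts [by rwa [← h] at hc2, by have := negB hc2; rwa [← h] at this]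
    have hdd : (fun e : Option (Fin 5) => ((σ e : ℤ) • f e)) (some (3 : Fin 5)) ∈ emb '' Ioo 1 4 := by
      rcases hsgn (f (some (3 : Fin 5))) (σ (some (3 : Fin 5))) with h | h
      exacts [by rwa [← h] at hc3, by have := negB hc3; rwa [← h] at this]
    have hee : (fun e : Option (Fin 5) => ((σ e : ℤ) • f e)) (some (4 : Fin 5)) ∈ emb '' Ioo 1 4 := by
      rcases hsgn (f (some (4 : Fin 5))) (σ (some (4 : Fin 5))) with h | h
      exacts [by rwa [← h] at hc4, by have := negB hc4; rwa [← h] at this]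
    have hbk := backward (fun e : Option (Fin 5) => ((σ e : ℤ) • f e)) h0 h1 h2 ha hb hcc hdd hee
    have hbn : ((σ none : ℤ) • f none) ∈ emb '' Ioo 4 6 ∪ emb '' Ioo 2 3 := hbk
    rcases hsgn (f none) (σ none) with h | h
    · rwa [h] at hbn
    · rw [h] at hbn
      have := negT hbn
      rwa [neg_neg] at this
  · rintro (⟨τ, hτ, rfl⟩ | ⟨τ, hτ, rfl⟩)
    · -- τ ∈ Ioo 4 6
      obtain ⟨hτ1, hτ2⟩ := hτ
      refine ⟨fun _ => 1,
        fun e : Option (Fin 5) => e.elim (emb τ)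
          ![emb ((18-τ)/4), emb ((8+τ)/4), emb ((22-3*τ)/4), emb ((3*τ-8)/4), emb (13/2)],
        ?_, ?_, rfl⟩
      · show (K4minus.addEdge _ _).IsFlow _
        simp only [Units.val_one, one_smul]
        refine (isflow_iff _).mpr ?_
        refine ⟨?_, ?_, ?_, ?_⟩
        · show emb τ + (emb ((18-τ)/4) + emb ((22-3*τ)/4)) = 0
          rw [← emb_add, ← emb_add, emb_zero_iff]; exact ⟨2, by ring⟩
        · show emb ((8+τ)/4) + emb ((3*τ-8)/4) = emb τ
          rw [← emb_add]; exact congrArg emb (by ring)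
        · show emb (13/2) = emb ((18-τ)/4) + emb ((8+τ)/4)
          rw [← emb_add]; exact congrArg emb (by ring)
        · show (0 : AddCircle (5:ℝ)) = emb ((22-3*τ)/4) + emb ((3*τ-8)/4) + emb (13/2)
          rw [← emb_add, ← emb_add]
          exact ((emb_zero_iff _).mpr ⟨2, by ring⟩).symm
      · intro e
        fin_cases e
        · show emb ((18-τ)/4) ∈ openArc 5 1 2 ∪ openArc 5 3 4
          rw [arc12, arc34]
          exact Or.inr ⟨(18-τ)/4, ⟨by linarith, by linarith⟩, rfl⟩
        · show emb ((8+τ)/4) ∈ openArc 5 1 2 ∪ openArc 5 3 4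
          rw [arc12, arc34]
          exact Or.inr ⟨(8+τ)/4, ⟨by linarith, by linarith⟩, rfl⟩
        · show emb ((22-3*τ)/4) ∈ openArc 5 1 4
          rw [arc14]; exact ⟨(22-3*τ)/4, ⟨by linarith, by linarith⟩, rfl⟩
        · show emb ((3*τ-8)/4) ∈ openArc 5 1 4
          rw [arc14]; exact ⟨(3*τ-8)/4, ⟨by linarith, by linarith⟩, rfl⟩
        · show emb (13/2) ∈ openArc 5 1 4
          rw [arc14]
          refine ⟨3/2, ⟨by norm_num, by norm_num⟩, ?_⟩
          rw [emb_eq_iff]; exact ⟨-1, by norm_num⟩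
    · -- τ ∈ Ioo 2 3
      obtain ⟨hτ1, hτ2⟩ := hτ
      refine ⟨fun _ => 1,
        fun e : Option (Fin 5) => e.elim (emb τ)
          ![emb ((5-τ)/2), emb (τ/2), emb ((5-τ)/2), emb (τ/2), emb (5/2)],
        ?_, ?_, rfl⟩
      · show (K4minus.addEdge _ _).IsFlow _
        simp only [Units.val_one, one_smul]
        refine (isflow_iff _).mpr ?_
        refine ⟨?_, ?_, ?_, ?_⟩
        · show emb τ + (emb ((5-τ)/2) + emb ((5-τ)/2)) = 0
          rw [← emb_add, ← emb_add, emb_zero_iff]; exact ⟨1, by ring⟩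
        · show emb (τ/2) + emb (τ/2) = emb τ
          rw [← emb_add]; exact congrArg emb (by ring)
        · show emb (5/2) = emb ((5-τ)/2) + emb (τ/2)
          rw [← emb_add]; exact congrArg emb (by ring)
        · show (0 : AddCircle (5:ℝ)) = emb ((5-τ)/2) + emb (τ/2) + emb (5/2)
          rw [← emb_add, ← emb_add]
          exact ((emb_zero_iff _).mpr ⟨1, by ring⟩).symm
      · intro e
        fin_cases e
        · show emb ((5-τ)/2) ∈ openArc 5 1 2 ∪ openArc 5 3 4
          rw [arc12, arc34]
          exact Or.inl ⟨(5-τ)/2, ⟨by linarith, by linarith⟩, rfl⟩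
        · show emb (τ/2) ∈ openArc 5 1 2 ∪ openArc 5 3 4
          rw [arc12, arc34]
          exact Or.inl ⟨τ/2, ⟨by linarith, by linarith⟩, rfl⟩
        · show emb ((5-τ)/2) ∈ openArc 5 1 4
          rw [arc14]; exact ⟨(5-τ)/2, ⟨by linarith, by linarith⟩, rfl⟩
        · show emb (τ/2) ∈ openArc 5 1 4
          rw [arc14]; exact ⟨τ/2, ⟨by linarith, by linarith⟩, rfl⟩
        · show emb (5/2) ∈ openArc 5 1 4
          rw [arc14]; exact ⟨5/2, ⟨by norm_num, by norm_num⟩, rfl⟩
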